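/- For each integer n ≥ 0, the Euler polynomial E_n(x) equals (−1)^n times the determinant of the (n+1)×(n+1) matrix whose first column has entries 1, x, ..., x^n and whose (i,j)-entry for j ≥ 2 is C(i−1, j−2)·b_{i−j+1} if i ≥ j−1 and 0 otherwise, where b_0 = 1 and b_m = 1/2 for m ≥ 1. -/

import Mathlib

open Finset

/-- Stirling numbers of the second kind `S(n,k)`. -/
def stirling : ℕ → ℕ → ℕ
  | 0, 0 => 1
  | 0, _ + 1 => 0
  | _ + 1, 0 => 0
  | n + 1, k + 1 => (k + 1) * stirling n (k + 1) + stirling n k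

/-- The classical Euler polynomial `E_n(x)`, defined by the generating function
`2 e^{xt}/(eᵗ+1) = ∑ E_n(x) tⁿ/n!`, i.e. as the `n`-th derivative at `t = 0`. -/
noncomputable def eulerPoly (n : ℕ) (x : ℝ) : ℝ :=
  iteratedDeriv n (fun t => 2 * Real.exp (x * t) / (Real.exp t + 1)) 0

/-! ### Auxiliary material for the determinantal expression -/

lemma eulerAux_diffIter {f : ℝ → ℝ} (hf : ContDiff ℝ ⊤ f) (k : ℕ) :
    Differentiable ℝ (iteratedDeriv k f) :=
  hf.differentiable_iteratedDeriv k (by exact_mod_cast WithTop.coe_lt_top (k : ℕ∞))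

/-- Leibniz rule for iterated derivatives of a product of smooth functions. -/
lemma eulerAux_leibniz {f g : ℝ → ℝ} (hf : ContDiff ℝ ⊤ f) (hg : ContDiff ℝ ⊤ g) (n : ℕ) :
    iteratedDeriv n (fun y => f y * g y) =
      fun x => ∑ k ∈ range (n + 1), (n.choose k : ℝ) *
        (iteratedDeriv k f x * iteratedDeriv (n - k) g x) := by
  induction n with
  | zero => simp [iteratedDeriv_zero]
  | succ n ih =>
    funext x
    rw [iteratedDeriv_succ, ih]
    rw [deriv_fun_sum (fun k _ => by
      exact (((eulerAux_diffIter hf k).differentiableAt.mul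
        (eulerAux_diffIter hg (n - k)).differentiableAt).const_mul _))]
    have key : ∀ k ∈ range (n + 1),
        deriv (fun x => (n.choose k : ℝ) *
          (iteratedDeriv k f x * iteratedDeriv (n - k) g x)) x
        = (n.choose k : ℝ) * (iteratedDeriv (k+1) f x * iteratedDeriv (n - k) g x)
          + (n.choose k : ℝ) * (iteratedDeriv k f x * iteratedDeriv (n + 1 - k) g x) := by
      intro k hk
      have hk' : k ≤ n := by have := mem_range.mp hk; omega
      rw [deriv_const_mul _ (d := fun y => iteratedDeriv k f y * iteratedDeriv (n - k) g y) ((eulerAux_diffIter hf k).differentiableAt.mul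
        (eulerAux_diffIter hg (n - k)).differentiableAt),
        deriv_fun_mul (eulerAux_diffIter hf k).differentiableAt
          (eulerAux_diffIter hg (n-k)).differentiableAt,
        ← iteratedDeriv_succ, ← iteratedDeriv_succ]
      have h1 : n - k + 1 = n + 1 - k := by omega
      rw [h1]; ring
    rw [Finset.sum_congr rfl key, Finset.sum_add_distrib]
    have h2 : ∑ k ∈ range (n + 1), (n.choose k : ℝ) *
          (iteratedDeriv k f x * iteratedDeriv (n + 1 - k) g x)
        = (∑ k ∈ range (n + 1), (n.choose (k+1) : ℝ) *
            (iteratedDeriv (k+1) f x * iteratedDeriv (n - k) g x))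
          + (iteratedDeriv 0 f x * iteratedDeriv (n + 1) g x) := by
      have hext : ∑ k ∈ range (n + 1), (n.choose k : ℝ) *
            (iteratedDeriv k f x * iteratedDeriv (n + 1 - k) g x)
          = ∑ k ∈ range (n + 2), (n.choose k : ℝ) *
            (iteratedDeriv k f x * iteratedDeriv (n + 1 - k) g x) := by
        rw [Finset.sum_range_succ (fun k => (n.choose k : ℝ) *
          (iteratedDeriv k f x * iteratedDeriv (n + 1 - k) g x)) (n+1)]
        simp [Nat.choose_succ_self]
      rw [hext, Finset.sum_range_succ' (fun k => (n.choose k : ℝ) *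
        (iteratedDeriv k f x * iteratedDeriv (n + 1 - k) g x)) (n+1)]
      simp [Nat.succ_sub_succ]
    rw [h2, Finset.sum_range_succ' (fun k => ((n+1).choose k : ℝ) *
      (iteratedDeriv k f x * iteratedDeriv (n + 1 - k) g x)) (n+1)]
    simp only [Nat.succ_sub_succ, Nat.choose_succ_succ, Nat.cast_add,
      Nat.choose_zero_right, Nat.cast_one, one_mul, Nat.sub_zero]
    rw [Finset.sum_congr rfl (fun k _ => add_mul ((n.choose k : ℝ)) _ _),
      Finset.sum_add_distrib]
    ring

lemma eulerAux_exp_add_one_ne_zero (t : ℝ) : Real.exp t + 1 ≠ 0 := by positivity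

lemma eulerAux_contDiff_G : ContDiff ℝ ⊤ (fun t : ℝ => Real.exp t + 1) :=
  Real.contDiff_exp.add contDiff_const

lemma eulerAux_contDiff_F (x : ℝ) :
    ContDiff ℝ ⊤ (fun t => 2 * Real.exp (x * t) / (Real.exp t + 1)) := by
  apply ContDiff.div
  · exact contDiff_const.mul (Real.contDiff_exp.comp (contDiff_const.mul contDiff_id))
  · exact eulerAux_contDiff_G
  · exact eulerAux_exp_add_one_ne_zero

lemma eulerAux_iter_G (k : ℕ) (hk : 1 ≤ k) :
    iteratedDeriv k (fun t : ℝ => Real.exp t + 1) 0 = 1 := by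
  obtain ⟨m, rfl⟩ := Nat.exists_eq_add_of_le hk
  rw [add_comm 1 m, iteratedDeriv_succ']
  have hd : deriv (fun t : ℝ => Real.exp t + 1) = Real.exp := by
    funext t
    rw [deriv_fun_add (Real.differentiable_exp t) (differentiableAt_const 1)]
    simp
  rw [hd, iteratedDeriv_eq_iterate, Real.iter_deriv_exp]
  exact Real.exp_zero

lemma eulerAux_iter_E (x : ℝ) (n : ℕ) :
    iteratedDeriv n (fun t => 2 * Real.exp (x * t)) 0 = 2 * x ^ n := by
  have h : iteratedDeriv n (fun t => 2 * Real.exp (x * t)) 0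
      = iteratedDerivWithin n (fun t => 2 * Real.exp (x * t)) Set.univ 0 := by
    rw [iteratedDerivWithin_univ]
  have hf : ContDiffOn ℝ n (fun t : ℝ => Real.exp (x * t)) Set.univ :=
    ContDiff.contDiffOn (by exact Real.contDiff_exp.comp (contDiff_const.mul contDiff_id))
  rw [h, iteratedDerivWithin_const_mul (Set.mem_univ 0) uniqueDiffOn_univ (2:ℝ) (hf 0 (Set.mem_univ 0)),
    iteratedDerivWithin_univ, iteratedDeriv_exp_const_mul]
  simp

/-- The basic recurrence satisfied by the Euler polynomials. -/
lemma eulerAux_rec (x : ℝ) (n : ℕ) :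
    eulerPoly n x = x ^ n - (1/2) * ∑ k ∈ range n, (n.choose k : ℝ) * eulerPoly k x := by
  have hmul : (fun t => (Real.exp t + 1) * (2 * Real.exp (x * t) / (Real.exp t + 1)))
      = fun t => 2 * Real.exp (x * t) := by
    funext t
    rw [mul_comm, div_mul_cancel₀ _ (eulerAux_exp_add_one_ne_zero t)]
  have h := congrFun (eulerAux_leibniz eulerAux_contDiff_G (eulerAux_contDiff_F x) n) 0
  rw [hmul, eulerAux_iter_E] at h
  rw [Finset.sum_range_succ' _ n] at h
  simp only [Nat.choose_zero_right, Nat.cast_one, one_mul, iteratedDeriv_zero,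
    Nat.sub_zero] at h
  have hG0 : Real.exp 0 + 1 = 2 := by rw [Real.exp_zero]; norm_num
  rw [hG0] at h
  have hrw : ∀ k ∈ range n, (n.choose (k+1) : ℝ) *
      (iteratedDeriv (k+1) (fun t : ℝ => Real.exp t + 1) 0 *
        iteratedDeriv (n - (k+1)) (fun t => 2 * Real.exp (x * t) / (Real.exp t + 1)) 0)
      = (n.choose (k+1) : ℝ) * eulerPoly (n - (k+1)) x := by
    intro k hk
    rw [eulerAux_iter_G (k+1) (by omega), one_mul, eulerPoly]
  rw [Finset.sum_congr rfl hrw] at h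
  have hrefl : ∑ k ∈ range n, (n.choose (k+1) : ℝ) * eulerPoly (n - (k+1)) x
      = ∑ k ∈ range n, (n.choose k : ℝ) * eulerPoly k x := by
    rw [← Finset.sum_range_reflect]
    apply Finset.sum_congr rfl
    intro k hk
    have hk' : k < n := mem_range.mp hk
    have h1 : n - 1 - k + 1 = n - k := by omega
    have h2 : n - (n - k) = k := by omega
    rw [h1, h2, Nat.choose_symm (by omega)]
  rw [hrefl] at h
  have hE : eulerPoly n x = iteratedDeriv n
      (fun t => 2 * Real.exp (x * t) / (Real.exp t + 1)) 0 := rfl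
  rw [hE]
  linarith

/-- The sequence defined by the same recurrence, used to compare with the determinant. -/
noncomputable def eulerAuxP (x : ℝ) : ℕ → ℝ
  | n => x ^ n - (1/2) * ∑ k ∈ (Finset.range n).attach,
      ((n.choose k.1 : ℝ) * eulerAuxP x k.1)
  decreasing_by exact Finset.mem_range.mp k.2

lemma eulerAuxP_eq (x : ℝ) (n : ℕ) :
    eulerAuxP x n = x ^ n - (1/2) * ∑ k ∈ range n, (n.choose k : ℝ) * eulerAuxP x k := by
  rw [eulerAuxP, ← Finset.sum_attach (range n) (fun k => (n.choose k : ℝ) * eulerAuxP x k)]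

lemma eulerPoly_eq_eulerAuxP (x : ℝ) (n : ℕ) : eulerPoly n x = eulerAuxP x n := by
  induction n using Nat.strong_induction_on with
  | _ n ih =>
    rw [eulerAux_rec, eulerAuxP_eq]
    congr 1
    congr 1
    apply Finset.sum_congr rfl
    intro k hk
    rw [ih k (mem_range.mp hk)]

open Matrix in
/-- The lower-triangular matrix of the coefficients `C(i,k) b_{i-k}`. -/
noncomputable def eulerAuxL (n : ℕ) : Matrix (Fin (n+1)) (Fin (n+1)) ℝ :=
  Matrix.of fun i k => ((i : ℕ).choose (k : ℕ) : ℝ) *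
    (if (i : ℕ) - (k : ℕ) = 0 then 1 else 1/2)

lemma eulerAuxL_det (n : ℕ) : (eulerAuxL n).det = 1 := by
  have h : (eulerAuxL n).BlockTriangular OrderDual.toDual := by
    intro i j hij
    have hlt : (i : ℕ) < (j : ℕ) := hij
    simp [eulerAuxL, Nat.choose_eq_zero_of_lt hlt]
  rw [Matrix.det_of_lowerTriangular _ h]
  apply Finset.prod_eq_one
  intro i _
  simp [eulerAuxL]

open Matrix in
lemma eulerAuxL_mulVec (n : ℕ) (x : ℝ) :
    (eulerAuxL n) *ᵥ (fun k : Fin (n+1) => eulerAuxP x (k : ℕ))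
      = fun i : Fin (n+1) => x ^ (i : ℕ) := by
  funext i
  show ∑ k : Fin (n+1), eulerAuxL n i k * eulerAuxP x (k : ℕ) = x ^ (i : ℕ)
  have hg : ∀ k : Fin (n+1), eulerAuxL n i k * eulerAuxP x (k : ℕ)
      = (fun m : ℕ => ((i : ℕ).choose m : ℝ) *
          (if (i : ℕ) - m = 0 then 1 else 1/2) * eulerAuxP x m) (k : ℕ) := by
    intro k; simp [eulerAuxL, mul_assoc]
  rw [Finset.sum_congr rfl (fun k _ => hg k),
    Fin.sum_univ_eq_sum_range (fun m : ℕ => ((i : ℕ).choose m : ℝ) *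
      (if (i : ℕ) - m = 0 then 1 else 1/2) * eulerAuxP x m) (n+1)]
  rw [← Finset.sum_subset (Finset.range_subset_range.mpr (show (i:ℕ)+1 ≤ n+1 by omega))
    (fun m _ hm => by
      have : (i : ℕ) < m := by
        simp only [mem_range, not_lt] at hm; omega
      simp [Nat.choose_eq_zero_of_lt this])]
  rw [Finset.sum_range_succ]
  have hlast : ((i : ℕ).choose (i:ℕ) : ℝ) * (if (i : ℕ) - (i:ℕ) = 0 then 1 else 1/2)
      * eulerAuxP x (i:ℕ) = eulerAuxP x (i:ℕ) := by simp
  have hrest : ∑ m ∈ range (i:ℕ), ((i : ℕ).choose m : ℝ) *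
      (if (i : ℕ) - m = 0 then 1 else 1/2) * eulerAuxP x m
      = (1/2) * ∑ m ∈ range (i:ℕ), ((i : ℕ).choose m : ℝ) * eulerAuxP x m := by
    rw [Finset.mul_sum]
    apply Finset.sum_congr rfl
    intro m hm
    have : (i:ℕ) - m ≠ 0 := by have := mem_range.mp hm; omega
    rw [if_neg this]; ring
  rw [hlast, hrest, eulerAuxP_eq x (i:ℕ)]
  ring

lemma eulerAux_updateCol_det (n : ℕ) (x : ℝ) :
    ((eulerAuxL n).updateCol (Fin.last n) (fun i : Fin (n+1) => x ^ (i : ℕ))).det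
      = eulerAuxP x n := by
  rw [← Matrix.cramer_apply, ← eulerAuxL_mulVec n x, Matrix.cramer_eq_adjugate_mulVec,
    Matrix.mulVec_mulVec, Matrix.adjugate_mul, eulerAuxL_det]
  simp

lemma eulerAux_perm_step (n : ℕ) (x : ℝ) :
    ((Matrix.of fun i j : Fin (n + 1) =>
          if (j : ℕ) = 0 then x ^ (i : ℕ)
          else if (j : ℕ) ≤ (i : ℕ) + 1 then
            ((i : ℕ).choose ((j : ℕ) - 1) : ℝ) *
              (if (i : ℕ) + 1 - (j : ℕ) = 0 then 1 else 1 / 2)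
          else 0).submatrix id ⇑(finRotate (n+1)))
      = (eulerAuxL n).updateCol (Fin.last n) (fun i : Fin (n+1) => x ^ (i : ℕ)) := by
  funext i j
  rw [Matrix.submatrix_apply, Matrix.updateCol_apply]
  by_cases hj : j = Fin.last n
  · subst hj
    rw [if_pos rfl]
    have h0 : finRotate (n+1) (Fin.last n) = 0 := by
      rw [finRotate_succ_apply, Fin.last_add_one]
    rw [h0]
    simp
  · rw [if_neg hj]
    have hjlt : j < Fin.last n := lt_of_le_of_ne (Fin.le_last j) hj
    have hval : ((finRotate (n+1) j : Fin (n+1)) : ℕ) = (j : ℕ) + 1 := by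
      rw [finRotate_succ_apply, Fin.val_add_one_of_lt hjlt]
    rw [Matrix.of_apply, hval]
    simp only [id_eq]
    have h1 : ¬((j : ℕ) + 1 = 0) := by omega
    rw [if_neg h1]
    by_cases hij : (j : ℕ) + 1 ≤ (i : ℕ) + 1
    · rw [if_pos hij]
      have e1 : (j : ℕ) + 1 - 1 = (j : ℕ) := by omega
      have e2 : (i : ℕ) + 1 - ((j : ℕ) + 1) = (i : ℕ) - (j : ℕ) := by omega
      rw [e1]; simp only [e2]; rfl
    · rw [if_neg hij]
      have : (i : ℕ) < (j : ℕ) := by omega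
      simp [eulerAuxL, Nat.choose_eq_zero_of_lt this]

/-- The determinantal expression for the classical Euler polynomials, where
`b₀ = 1` and `b_m = 1/2` for `m ≥ 1`. -/
theorem eulerPoly_det (n : ℕ) (x : ℝ) :
    eulerPoly n x =
      (-1 : ℝ) ^ n *
        (Matrix.of fun i j : Fin (n + 1) =>
          if (j : ℕ) = 0 then x ^ (i : ℕ)
          else if (j : ℕ) ≤ (i : ℕ) + 1 then
            ((i : ℕ).choose ((j : ℕ) - 1) : ℝ) *
              (if (i : ℕ) + 1 - (j : ℕ) = 0 then 1 else 1 / 2)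
          else 0).det := by
  rw [eulerPoly_eq_eulerAuxP, ← eulerAux_updateCol_det n x, ← eulerAux_perm_step n x,
    Matrix.det_permute', sign_finRotate]
  push_cast
  ring
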